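/- Let w* ∈ ℝ with w* ≠ 0, let J be the closed interval with endpoints 0 and w*, and let g: J → ℝ be continuous with g(w*) = 0 and (w* − x)·g(x) > 0 for every x ∈ J ∖ {w*}. Then: (i) there exists a differentiable function y: [0,∞) → J with y(0) = 0 and y'(t) = g(y(t)) for all t ≥ 0; (ii) every such function y is monotone (nondecreasing if w* > 0, nonincreasing if w* < 0) and satisfies lim_{t→∞} y(t) = w*; and (iii) for every such y and every continuous f: J → ℝ, lim_{t→∞} (1/t)∫₀ᵗ f(y(s)) ds = f(w*). -/

import Mathlib

open Set Filter MeasureTheory intervalIntegral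

/-- A solution of the autonomous ODE `y' = g(y)`, `y(0) = 0`, with values in the
closed interval `J` with endpoints `0` and `w*`. -/
def IsSolutionTo (g : ℝ → ℝ) (wstar : ℝ) (y : ℝ → ℝ) : Prop :=
  y 0 = 0 ∧ (∀ t : ℝ, 0 ≤ t → y t ∈ uIcc (0 : ℝ) wstar) ∧
    ∀ t : ℝ, 0 ≤ t → HasDerivWithinAt y (g (y t)) (Ici 0) t

open Topology

lemma cesaro_zero {h : ℝ → ℝ} (hc : Continuous h) (hl : Tendsto h atTop (𝓝 0)) :
    Tendsto (fun t : ℝ => (1 / t) * ∫ s in (0:ℝ)..t, h s) atTop (𝓝 0) := by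
  rw [Metric.tendsto_atTop]
  intro ε hε
  obtain ⟨T, hT⟩ := (Metric.tendsto_atTop.1 hl) (ε/2) (by positivity)
  set T' := max T 0 with hT'def
  set C := |∫ s in (0:ℝ)..T', h s| with hCdef
  have hC0 : 0 ≤ C := abs_nonneg _
  refine ⟨max T' (2*(C+1)/ε), fun t ht => ?_⟩
  have ht1 : T' ≤ t := le_trans (le_max_left _ _) ht
  have ht2 : 2*(C+1)/ε ≤ t := le_trans (le_max_right _ _) ht
  have htpos : 0 < t := lt_of_lt_of_le (by positivity) ht2
  have hsplit : (∫ s in (0:ℝ)..t, h s) = (∫ s in (0:ℝ)..T', h s) + ∫ s in T'..t, h s :=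
    (intervalIntegral.integral_add_adjacent_intervals (hc.intervalIntegrable _ _)
      (hc.intervalIntegrable _ _)).symm
  have htail : |∫ s in T'..t, h s| ≤ (ε/2) * |t - T'| := by
    rw [show |∫ s in T'..t, h s| = ‖∫ s in T'..t, h s‖ from rfl]
    apply intervalIntegral.norm_integral_le_of_norm_le_const
    intro x hx
    rw [uIoc_of_le ht1] at hx
    have : T ≤ x := le_trans (le_max_left _ _) hx.1.le
    have := hT x this
    rw [Real.dist_eq, sub_zero] at this
    exact le_of_lt this
  have hbound : |∫ s in (0:ℝ)..t, h s| ≤ C + (ε/2) * t := by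
    rw [hsplit]
    refine le_trans (abs_add_le _ _) (add_le_add le_rfl (le_trans htail ?_))
    have h1 : |t - T'| ≤ t := by
      rw [abs_of_nonneg (by linarith)]
      have : (0:ℝ) ≤ T' := le_max_right _ _
      linarith
    nlinarith
  rw [Real.dist_eq, sub_zero]
  have : |1/t * ∫ s in (0:ℝ)..t, h s| = (1/t) * |∫ s in (0:ℝ)..t, h s| := by
    rw [abs_mul, abs_of_pos (by positivity)]
  rw [this]
  have h2 : (1/t) * |∫ s in (0:ℝ)..t, h s| ≤ (1/t) * (C + (ε/2)*t) := by
    apply mul_le_mul_of_nonneg_left hbound (by positivity)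
  have h3 : (1/t) * (C + (ε/2)*t) = C/t + ε/2 := by
    field_simp
  have h4 : C/t < ε/2 := by
    rw [div_lt_iff₀ htpos]
    have : 2*(C+1)/ε * (ε/2) ≤ t * (ε/2) := mul_le_mul_of_nonneg_right ht2 (by positivity)
    have heq : 2*(C+1)/ε * (ε/2) = C+1 := by field_simp
    nlinarith
  linarith

lemma cesaro {h : ℝ → ℝ} (hc : Continuous h) {l : ℝ} (hl : Tendsto h atTop (𝓝 l)) :
    Tendsto (fun t : ℝ => (1 / t) * ∫ s in (0:ℝ)..t, h s) atTop (𝓝 l) := by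
  have h0 : Tendsto (fun s => h s - l) atTop (𝓝 0) := by
    simpa using hl.sub (tendsto_const_nhds (x := l))
  have := (cesaro_zero (hc.sub continuous_const) h0).add (tendsto_const_nhds (x := l))
  rw [zero_add] at this
  apply this.congr'
  filter_upwards [eventually_gt_atTop 0] with t htpos
  have hint : (∫ s in (0:ℝ)..t, (h s - l)) = (∫ s in (0:ℝ)..t, h s) - t * l := by
    rw [intervalIntegral.integral_sub (hc.intervalIntegrable _ _)
      (intervalIntegrable_const)]
    simp [mul_comm]
  show (1 / t * ∫ s in (0:ℝ)..t, (h s - l)) + l = 1 / t * ∫ s in (0:ℝ)..t, h s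
  rw [hint]
  field_simp
  ring

lemma monoOn_of_deriv {y d : ℝ → ℝ} (hd : ∀ t:ℝ, 0 ≤ t → HasDerivWithinAt y (d t) (Ici 0) t)
    (hpos : ∀ t:ℝ, 0 ≤ t → 0 ≤ d t) : MonotoneOn y (Ici 0) := by
  apply monotoneOn_of_deriv_nonneg (convex_Ici 0)
  · exact fun t ht => (hd t ht).continuousWithinAt
  · intro t ht
    rw [interior_Ici] at ht
    exact ((hd t (le_of_lt ht)).hasDerivAt (Ici_mem_nhds ht)).differentiableAt.differentiableWithinAt
  · intro t ht
    rw [interior_Ici] at ht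
    rw [((hd t (le_of_lt ht)).hasDerivAt (Ici_mem_nhds ht)).deriv]
    exact hpos t (le_of_lt ht)

lemma tendsto_pos {w : ℝ} (hw : 0 < w) {g y : ℝ → ℝ}
    (hg : ContinuousOn g (Icc 0 w)) (hgw : g w = 0)
    (hgpos : ∀ x, 0 ≤ x → x < w → 0 < g x)
    (hy : IsSolutionTo g w y) :
    MonotoneOn y (Ici 0) ∧ Tendsto y atTop (𝓝 w) := by
  obtain ⟨hy0, hmem, hder⟩ := hy
  have hmem' : ∀ t : ℝ, 0 ≤ t → y t ∈ Icc 0 w := by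
    intro t ht; have := hmem t ht; rwa [uIcc_of_le hw.le] at this
  have hgnonneg : ∀ x ∈ Icc (0:ℝ) w, 0 ≤ g x := by
    intro x hx
    rcases lt_or_eq_of_le hx.2 with h | h
    · exact (hgpos x hx.1 h).le
    · rw [h, hgw]
  have hmono : MonotoneOn y (Ici 0) :=
    monoOn_of_deriv hder (fun t ht => hgnonneg _ (hmem' t ht))
  refine ⟨hmono, ?_⟩
  set Y : ℝ → ℝ := fun t => y (max t 0) with hYdef
  have hYmono : Monotone Y := fun s t hst =>
    hmono (le_max_right s 0) (le_max_right t 0) (max_le_max hst le_rfl)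
  have hYbdd : BddAbove (range Y) := ⟨w, by rintro _ ⟨t, rfl⟩; exact (hmem' _ (le_max_right t 0)).2⟩
  set c := ⨆ t, Y t with hcdef
  have hYc : Tendsto Y atTop (𝓝 c) := tendsto_atTop_ciSup hYmono hYbdd
  have hEq : ∀ᶠ t in atTop, Y t = y t := by
    filter_upwards [eventually_ge_atTop (0:ℝ)] with t ht
    rw [hYdef]; simp [max_eq_left ht]
  have hytc : ∀ t : ℝ, 0 ≤ t → y t ≤ c := by
    intro t ht
    have h := le_ciSup hYbdd t
    simpa [hYdef, max_eq_left ht] using h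
  have hcw : c ≤ w := ciSup_le (fun t => (hmem' _ (le_max_right t 0)).2)
  have hc0 : 0 ≤ c := by
    have : Y 0 ≤ c := le_ciSup hYbdd 0
    simpa [hYdef, hy0] using this
  have hceq : c = w := by
    by_contra hne
    have hclt : c < w := lt_of_le_of_ne hcw hne
    obtain ⟨z, hz, hzmin⟩ := isCompact_Icc.exists_isMinOn (nonempty_Icc.2 hc0)
      (hg.mono (Icc_subset_Icc le_rfl hcw))
    have hzmin : ∀ x ∈ Icc (0:ℝ) c, g z ≤ g x := fun x hx => hzmin hx
    set m := g z with hmdef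
    have hm : 0 < m := hgpos z hz.1 (lt_of_le_of_lt hz.2 hclt)
    have hφ : MonotoneOn (fun t => y t - m * t) (Ici 0) := by
      apply monoOn_of_deriv (d := fun t => g (y t) - m)
      · intro t ht
        exact (hder t ht).sub (by simpa using ((hasDerivAt_id t).const_mul m).hasDerivWithinAt)
      · intro t ht
        have : m ≤ g (y t) := hzmin _ ⟨(hmem' t ht).1, hytc t ht⟩
        linarith
    set t0 := (w + 1) / m with ht0def
    have ht0 : 0 ≤ t0 := by positivity
    have h1 : m * t0 ≤ y t0 := by
      have h : y 0 - m * 0 ≤ y t0 - m * t0 := hφ (self_mem_Ici) ht0 ht0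
      rw [hy0] at h
      linarith
    have h2 : m * t0 = w + 1 := by rw [ht0def, mul_div_cancel₀ _ hm.ne']
    have := (hmem' t0 ht0).2
    linarith
  rw [← hceq]
  exact hYc.congr' hEq

lemma exists_pos {w : ℝ} (hw : 0 < w) {g : ℝ → ℝ}
    (hg : ContinuousOn g (Icc 0 w)) (hgw : g w = 0)
    (hgpos : ∀ x, 0 ≤ x → x < w → 0 < g x) :
    ∃ y : ℝ → ℝ, IsSolutionTo g w y := by
  set G : ℝ → ℝ := fun x => g (min (max x 0) w) with hGdef
  have hGcont : Continuous G := by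
    apply hg.comp_continuous (by fun_prop)
    exact fun x => ⟨le_min (le_max_right x 0) hw.le, min_le_right _ _⟩
  have hGeq : ∀ x, 0 ≤ x → x ≤ w → G x = g x := by
    intro x h0 hxw
    show g _ = g x
    rw [max_eq_left h0, min_eq_left hxw]
  have hGpos : ∀ x, x < w → 0 < G x := by
    intro x hx
    show 0 < g _
    rw [min_eq_left (max_lt hx hw).le]
    exact hgpos _ (le_max_right x 0) (max_lt hx hw)
  have hGneg : ∀ x, x ≤ 0 → G x = g 0 := by
    intro x hx
    show g _ = g 0
    rw [max_eq_right hx, min_eq_left hw.le]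
  have hg0 : 0 < g 0 := hgpos 0 le_rfl hw
  have hIcont : ContinuousOn (fun x => (G x)⁻¹) (Iio w) :=
    hGcont.continuousOn.inv₀ (fun x hx => (hGpos x hx).ne')
  have hIsub : ∀ {a b : ℝ}, a < w → b < w → uIcc a b ⊆ Iio w := by
    intro a b ha hb z hz
    exact lt_of_le_of_lt hz.2 (max_lt ha hb)
  have hInt : ∀ a b : ℝ, a < w → b < w → IntervalIntegrable (fun x => (G x)⁻¹) volume a b :=
    fun a b ha hb => (hIcont.mono (hIsub ha hb)).intervalIntegrable
  set T : ℝ → ℝ := fun x => ∫ s in (0:ℝ)..x, (G s)⁻¹ with hTdef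
  have hT0 : T 0 = 0 := intervalIntegral.integral_same
  have hTd : ∀ x, x < w → HasDerivAt T (G x)⁻¹ x := fun x hx =>
    intervalIntegral.integral_hasDerivAt_right (hInt 0 x hw hx)
      (hIcont.stronglyMeasurableAtFilter isOpen_Iio x hx)
      (hIcont.continuousAt (Iio_mem_nhds hx))
  have hTc : ContinuousOn T (Iio w) := fun x hx => (hTd x hx).continuousAt.continuousWithinAt
  have hTmono : StrictMonoOn T (Iio w) := by
    apply strictMonoOn_of_deriv_pos (convex_Iio w) hTc
    intro x hx
    rw [interior_Iio] at hx
    rw [(hTd x hx).deriv]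
    exact inv_pos.2 (hGpos x hx)
  have hTmonoOn : MonotoneOn T (Iio w) := hTmono.monotoneOn
  have hTlin : ∀ x, x ≤ 0 → T x = x * (g 0)⁻¹ := by
    intro x hx
    have heq : EqOn (fun s => (G s)⁻¹) (fun _ => (g 0)⁻¹) (uIcc 0 x) := by
      intro s hs
      rw [uIcc_of_ge hx] at hs
      simp only
      rw [hGneg s hs.2]
    show (∫ s in (0:ℝ)..x, (G s)⁻¹) = x * (g 0)⁻¹
    rw [intervalIntegral.integral_congr heq, intervalIntegral.integral_const]
    simp [smul_eq_mul]
  set A : ℝ → Set ℝ := fun t => {x | x < w ∧ T x ≤ t} with hAdef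
  have hAne : ∀ t, (A t).Nonempty := by
    intro t
    refine ⟨min 0 (t * g 0), lt_of_le_of_lt (min_le_left _ _) hw, ?_⟩
    rw [hTlin _ (min_le_left _ _)]
    calc min 0 (t * g 0) * (g 0)⁻¹ ≤ (t * g 0) * (g 0)⁻¹ :=
          mul_le_mul_of_nonneg_right (min_le_right _ _) (inv_nonneg.2 hg0.le)
    _ = t := by field_simp
  have hAbdd : ∀ t, BddAbove (A t) := fun t => ⟨w, fun x hx => hx.1.le⟩
  have hAdc : ∀ t x x', x ∈ A t → x' ≤ x → x' ∈ A t := by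
    rintro t x x' ⟨hxw, hxT⟩ h
    exact ⟨lt_of_le_of_lt h hxw, le_trans (hTmonoOn (lt_of_le_of_lt h hxw) hxw h) hxT⟩
  set u : ℝ → ℝ := fun t => sSup (A t) with hudef
  have humono : Monotone u := fun s t hst =>
    csSup_le_csSup (hAbdd t) (hAne s) (fun x hx => ⟨hx.1, hx.2.trans hst⟩)
  have hulew : ∀ t, u t ≤ w := fun t => csSup_le (hAne t) (fun x hx => hx.1.le)
  have huT : ∀ x, x < w → u (T x) = x := by
    intro x hx
    apply le_antisymm
    · apply csSup_le (hAne _)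
      rintro a ⟨haw, haT⟩
      by_contra hlt
      push_neg at hlt
      exact absurd haT (not_le.2 (hTmono hx haw hlt))
    · exact le_csSup (hAbdd _) ⟨hx, le_rfl⟩
  have hu0 : u 0 = 0 := by have := huT 0 hw; rwa [hT0] at this
  have key : ∀ t x₀, x₀ < w → t < T x₀ → u t < w ∧ T (u t) = t := by
    intro t x₀ hx₀ ht
    have hub : ∀ a ∈ A t, a ≤ x₀ := by
      rintro a ⟨haw, haT⟩
      by_contra hlt
      push_neg at hlt
      exact absurd (le_trans (hTmonoOn hx₀ haw hlt.le) haT) (not_le.2 ht)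
    have hcx₀ : u t ≤ x₀ := csSup_le (hAne t) hub
    have hcw : u t < w := lt_of_le_of_lt hcx₀ hx₀
    refine ⟨hcw, ?_⟩
    have hTle : T (u t) ≤ t := by
      have htend : Tendsto T (𝓝[<] (u t)) (𝓝 (T (u t))) :=
        ((hTd _ hcw).continuousAt.tendsto).mono_left nhdsWithin_le_nhds
      apply le_of_tendsto htend
      filter_upwards [self_mem_nhdsWithin] with x hx
      obtain ⟨a, ha, hxa⟩ := exists_lt_of_lt_csSup (hAne t) hx
      exact (hAdc t a x ha hxa.le).2
    rcases eq_or_lt_of_le hTle with h | h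
    · exact h
    · exfalso
      have hsub : Icc (u t) x₀ ⊆ Iio w := fun z hz => lt_of_le_of_lt hz.2 hx₀
      obtain ⟨x, hxmem, hTx⟩ := intermediate_value_Icc hcx₀ (hTc.mono hsub) ⟨h.le, ht.le⟩
      have hxA : x ∈ A t := ⟨lt_of_le_of_lt hxmem.2 hx₀, hTx.le⟩
      have hxle : x ≤ u t := le_csSup (hAbdd t) hxA
      have hTxle : T x ≤ T (u t) := hTmonoOn (lt_of_le_of_lt hxmem.2 hx₀) hcw hxle
      rw [hTx] at hTxle
      exact absurd h (not_lt.2 hTxle)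
  have hucont : ∀ t x₀, x₀ < w → t < T x₀ → ContinuousAt u t := by
    intro t x₀ hx₀ ht
    obtain ⟨hcw, hTc'⟩ := key t x₀ hx₀ ht
    rw [ContinuousAt, Metric.tendsto_nhds]
    intro ε hε
    set c := u t with hcdef
    set b := min (c + ε/2) ((c + w)/2) with hbdef
    have hcb : c < b := lt_min (by linarith) (by linarith)
    have hbw : b < w := lt_of_le_of_lt (min_le_right _ _) (by linarith)
    set a := c - ε/2 with hadef
    have hac : a < c := by rw [hadef]; linarith
    have haw : a < w := lt_trans hac hcw
    have hTa : T a < t := by rw [← hTc']; exact hTmono haw hcw hac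
    have hTb : t < T b := by rw [← hTc']; exact hTmono hcw hbw hcb
    filter_upwards [Ioo_mem_nhds hTa hTb] with s hs
    have h1 : a ≤ u s := by rw [← huT a haw]; exact humono hs.1.le
    have h2 : u s ≤ b := by rw [← huT b hbw]; exact humono hs.2.le
    rw [Real.dist_eq, abs_lt]
    have hble : b ≤ c + ε/2 := min_le_left _ _
    constructor
    · rw [hadef] at h1; linarith
    · linarith
  have huderiv : ∀ t x₀, x₀ < w → t < T x₀ → HasDerivAt u (G (u t)) t := by
    intro t x₀ hx₀ ht
    obtain ⟨hcw, hTct⟩ := key t x₀ hx₀ ht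
    have h := HasDerivAt.of_local_left_inverse (hucont t x₀ hx₀ ht)
      (hTd _ hcw) (inv_ne_zero (hGpos _ hcw).ne')
      (by filter_upwards [Iio_mem_nhds ht] with s hs; exact (key s x₀ hx₀ hs).2)
    rwa [inv_inv] at h
  refine ⟨u, hu0, ?_, ?_⟩
  · intro t ht
    rw [uIcc_of_le hw.le]
    exact ⟨by rw [← hu0]; exact humono ht, hulew t⟩
  · intro t ht
    by_cases hcase : ∃ x₀, x₀ < w ∧ t < T x₀
    · obtain ⟨x₀, hx₀, htx⟩ := hcase
      have hd := huderiv t x₀ hx₀ htx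
      have h0le : 0 ≤ u t := by rw [← hu0]; exact humono ht
      have hGg : G (u t) = g (u t) := hGeq _ h0le (hulew t)
      rw [← hGg]
      exact hd.hasDerivWithinAt
    · push_neg at hcase
      have hut : ∀ s, (∀ x, x < w → T x ≤ s) → u s = w := by
        intro s hs
        have hAs : A s = Iio w := by
          ext x
          exact ⟨fun h => h.1, fun h => ⟨h, hs x h⟩⟩
        show sSup (A s) = w
        rw [hAs, csSup_Iio]
      have hutw : u t = w := hut t hcase
      rw [hutw, hgw]
      by_cases hstrict : ∃ s₀, s₀ < t ∧ ∀ x, x < w → T x ≤ s₀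
      · obtain ⟨s₀, hs₀t, hs₀⟩ := hstrict
        have hev : u =ᶠ[𝓝 t] fun _ => w := by
          filter_upwards [Ioi_mem_nhds hs₀t] with s hs
          exact hut s (fun x hx => le_trans (hs₀ x hx) hs.le)
        exact (hev.hasDerivAt_iff.2 (hasDerivAt_const t w)).hasDerivWithinAt
      · push_neg at hstrict
        apply HasDerivAt.hasDerivWithinAt
        rw [hasDerivAt_iff_tendsto_slope]
        rw [← nhdsLT_sup_nhdsGT t, tendsto_sup]
        constructor
        · rw [Metric.tendsto_nhds]
          intro ε hε
          have hGw0 : G w = 0 := by rw [hGeq w hw.le le_rfl, hgw]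
          obtain ⟨δ, hδ, hδ2⟩ := Metric.continuousAt_iff.1 hGcont.continuousAt (ε/2)
            (by positivity)
          set xδ := max (w - δ/2) (w/2) with hxδdef
          have hxδw : xδ < w := max_lt (by linarith) (by linarith)
          have hxδδ : w - δ/2 ≤ xδ := le_max_left _ _
          obtain ⟨x', hx'1, hx'2⟩ := exists_between hxδw
          have hTx' : T xδ < t := lt_of_lt_of_le (hTmono hxδw hx'2 hx'1) (hcase x' hx'2)
          filter_upwards [Ioo_mem_nhdsLT_of_mem (⟨hTx', le_rfl⟩ : t ∈ Ioc (T xδ) t)]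
            with s hs
          have hst : s < t := hs.2
          have hus1 : xδ ≤ u s := by rw [← huT xδ hxδw]; exact humono hs.1.le
          obtain ⟨x₁, hx₁w, hsx₁⟩ := hstrict s hst
          obtain ⟨husw, hTus⟩ := key s x₁ hx₁w hsx₁
          have hbd : ∀ x₂, u s < x₂ → x₂ < w → x₂ - u s ≤ (t - s)*(ε/2) := by
            intro x₂ h1 h2
            have hadd := intervalIntegral.integral_add_adjacent_intervals
              (hInt 0 (u s) hw husw) (hInt (u s) x₂ husw h2)
            have hmono_int : (x₂ - u s) * (ε/2)⁻¹ ≤ ∫ z in (u s)..x₂, (G z)⁻¹ := by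
              have hle : ∫ z in (u s)..x₂, (ε/2)⁻¹ ≤ ∫ z in (u s)..x₂, (G z)⁻¹ := by
                apply intervalIntegral.integral_mono_on h1.le intervalIntegrable_const
                  (hInt _ _ husw h2)
                intro z hz
                have hz2 : z < w := lt_of_le_of_lt hz.2 h2
                have hzδ : w - δ < z := by
                  have := hz.1
                  linarith [hus1]
                have hGz : G z < ε/2 := by
                  have hd := hδ2 (show dist z w < δ by
                    rw [Real.dist_eq, abs_lt]; constructor <;> linarith)
                  rwa [hGw0, Real.dist_eq, sub_zero, abs_of_pos (hGpos z hz2)] at hd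
                exact inv_anti₀ (hGpos z hz2) hGz.le
              rwa [intervalIntegral.integral_const, smul_eq_mul] at hle
            have hTx₂ : T x₂ ≤ t := hcase x₂ h2
            have hfin : (x₂ - u s) * (ε/2)⁻¹ ≤ t - s := by
              have hint : (∫ z in (u s)..x₂, (G z)⁻¹) = T x₂ - T (u s) := by
                have h' : T (u s) + (∫ z in (u s)..x₂, (G z)⁻¹) = T x₂ := hadd
                linarith
              rw [hint, hTus] at hmono_int
              linarith
            calc x₂ - u s = ((x₂ - u s) * (ε/2)⁻¹) * (ε/2) := by field_simp
            _ ≤ (t - s) * (ε/2) := mul_le_mul_of_nonneg_right hfin (by positivity)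
          have hws : w - u s ≤ (t - s)*(ε/2) := by
            by_contra hcon
            push_neg at hcon
            obtain ⟨x₂, h1, h2⟩ := exists_between (show u s + (t-s)*(ε/2) < w by linarith)
            have hgt : u s < x₂ := by
              have : (0:ℝ) ≤ (t-s)*(ε/2) := mul_nonneg (by linarith) (by positivity)
              linarith
            have := hbd x₂ hgt h2
            linarith
          rw [Real.dist_eq, sub_zero]
          have hslope : slope u t s = (w - u s)/(t - s) := by
            rw [slope_def_field, hutw]
            rw [show u s - w = -(w - u s) by ring, show s - t = -(t - s) by ring,
              neg_div_neg_eq]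
          rw [hslope, abs_of_nonneg (div_nonneg (by linarith [hulew s]) (by linarith))]
          rw [div_lt_iff₀ (by linarith)]
          nlinarith
        · have hev : (fun _ : ℝ => (0:ℝ)) =ᶠ[𝓝[>] t] slope u t := by
            filter_upwards [self_mem_nhdsWithin] with s hs
            have husw : u s = w := hut s (fun x hx => le_trans (hcase x hx) (le_of_lt hs))
            rw [slope_def_field, husw, hutw, sub_self, zero_div]
          exact tendsto_const_nhds.congr' hev

lemma cesaro_solution {g : ℝ → ℝ} {w : ℝ} {y : ℝ → ℝ} (hy : IsSolutionTo g w y)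
    (hty : Tendsto y atTop (𝓝 w)) {f : ℝ → ℝ} (hf : ContinuousOn f (uIcc 0 w)) :
    Tendsto (fun t : ℝ => (1 / t) * ∫ s in (0:ℝ)..t, f (y s)) atTop (𝓝 (f w)) := by
  obtain ⟨hy0, hmem, hder⟩ := hy
  have hycont : ContinuousOn y (Ici 0) := fun t ht => (hder t ht).continuousWithinAt
  set h : ℝ → ℝ := fun s => f (y (max s 0)) with hhdef
  have hyc : Continuous (fun s : ℝ => y (max s 0)) :=
    hycont.comp_continuous (continuous_id.max continuous_const) (fun s => le_max_right s 0)
  have hhc : Continuous h := hf.comp_continuous hyc (fun s => hmem _ (le_max_right s 0))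
  have hhl : Tendsto h atTop (𝓝 (f w)) := by
    have h1 : Tendsto (fun s : ℝ => y (max s 0)) atTop (𝓝 w) := by
      apply hty.congr'
      filter_upwards [eventually_ge_atTop (0:ℝ)] with s hs
      rw [max_eq_left hs]
    have h2 : Tendsto (fun s : ℝ => y (max s 0)) atTop (𝓝[uIcc (0:ℝ) w] w) := by
      rw [tendsto_nhdsWithin_iff]
      exact ⟨h1, Eventually.of_forall (fun s => hmem _ (le_max_right s 0))⟩
    exact Filter.Tendsto.comp (hf w right_mem_uIcc) h2
  apply (cesaro hhc hhl).congr'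
  filter_upwards [eventually_ge_atTop (0:ℝ)] with t htpos
  congr 1
  apply intervalIntegral.integral_congr
  intro s hs
  rw [uIcc_of_le htpos] at hs
  show f (y (max s 0)) = f (y s)
  rw [max_eq_left hs.1]

lemma neg_mem_uIcc {a w : ℝ} (h : a ∈ uIcc (0:ℝ) w) : -a ∈ uIcc (0:ℝ) (-w) := by
  rcases mem_uIcc.1 h with ⟨h1, h2⟩ | ⟨h1, h2⟩
  · exact mem_uIcc.2 (Or.inr ⟨by linarith, by linarith⟩)
  · exact mem_uIcc.2 (Or.inl ⟨by linarith, by linarith⟩)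

lemma isSolutionTo_neg {g : ℝ → ℝ} {w : ℝ} {y : ℝ → ℝ} (h : IsSolutionTo g w y) :
    IsSolutionTo (fun x => -g (-x)) (-w) (fun t => -y t) := by
  obtain ⟨h0, hmem, hder⟩ := h
  refine ⟨by show -y 0 = 0; rw [h0, neg_zero], fun t ht => neg_mem_uIcc (hmem t ht), fun t ht => ?_⟩
  have := (hder t ht).neg
  show HasDerivWithinAt (fun t => -y t) (-g (-(-y t))) (Ici 0) t
  rw [neg_neg]
  exact this


/-- ODE content of Theorem 3.4: for `g` continuous on the interval `J`
between `0` and `w* ≠ 0` with `g(w*) = 0` and `(w* − x)·g(x) > 0` on `J ∖ {w*}`, the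
ODE `y' = g(y)`, `y(0)=0` has a solution in `J`; every solution is monotone towards
`w*`, converges to `w*`, and time-averages of `f(y(·))` converge to `f(w*)`. -/
theorem ode_converges_to_stable_zero (wstar : ℝ) (hw : wstar ≠ 0) (g : ℝ → ℝ)
    (hg : ContinuousOn g (uIcc (0 : ℝ) wstar)) (hgw : g wstar = 0)
    (hsign : ∀ x ∈ uIcc (0 : ℝ) wstar \ {wstar}, (wstar - x) * g x > 0) :
    (∃ y : ℝ → ℝ, IsSolutionTo g wstar y) ∧
    (∀ y : ℝ → ℝ, IsSolutionTo g wstar y →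
      ((0 < wstar → MonotoneOn y (Ici 0)) ∧ (wstar < 0 → AntitoneOn y (Ici 0))) ∧
      Tendsto y atTop (nhds wstar)) ∧
    (∀ y : ℝ → ℝ, IsSolutionTo g wstar y →
      ∀ f : ℝ → ℝ, ContinuousOn f (uIcc (0 : ℝ) wstar) →
        Tendsto (fun t : ℝ => (1 / t) * ∫ s in (0 : ℝ)..t, f (y s))
          atTop (nhds (f wstar))) := by
  rcases hw.lt_or_gt with hneg | hpos
  · -- wstar < 0 : reduce to the positive case by reflection
    have hWpos : (0:ℝ) < -wstar := by linarith
    have hmapsTo : MapsTo (fun x : ℝ => -x) (Icc 0 (-wstar)) (uIcc (0:ℝ) wstar) := by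
      intro x hx
      show -x ∈ uIcc (0:ℝ) wstar
      rw [uIcc_of_ge hneg.le]
      exact ⟨by linarith [hx.2], by linarith [hx.1]⟩
    have hG2c : ContinuousOn (fun x : ℝ => -g (-x)) (Icc 0 (-wstar)) :=
      (hg.comp continuous_neg.continuousOn hmapsTo).neg
    have hG2w : -g (-(-wstar)) = 0 := by rw [neg_neg, hgw, neg_zero]
    have hG2pos : ∀ x, 0 ≤ x → x < -wstar → 0 < -g (-x) := by
      intro x h0 hxW
      have hmx : -x ∈ uIcc (0:ℝ) wstar := by
        rw [uIcc_of_ge hneg.le]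
        exact ⟨by linarith, by linarith⟩
      have hlt : wstar < -x := by linarith
      have := hsign (-x) ⟨hmx, hlt.ne'⟩
      nlinarith
    have hback : ∀ y, IsSolutionTo g wstar y →
        IsSolutionTo (fun x : ℝ => -g (-x)) (-wstar) (fun t => -y t) :=
      fun y hy => isSolutionTo_neg hy
    have hconv : ∀ Y, IsSolutionTo (fun x : ℝ => -g (-x)) (-wstar) Y →
        IsSolutionTo g wstar (fun t => -Y t) := by
      intro Y hY
      have h2 := isSolutionTo_neg hY
      have hfun : (fun x : ℝ => -(fun x : ℝ => -g (-x)) (-x)) = g := by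
        funext x
        show -(-g (- -x)) = g x
        rw [neg_neg, neg_neg]
      rwa [hfun, neg_neg] at h2
    have hpart2 : ∀ y, IsSolutionTo g wstar y →
        AntitoneOn y (Ici 0) ∧ Tendsto y atTop (𝓝 wstar) := by
      intro y hy
      obtain ⟨hm, ht⟩ := tendsto_pos hWpos hG2c hG2w hG2pos (hback y hy)
      constructor
      · intro a ha b hb hab
        have h := hm ha hb hab
        simp only at h
        linarith
      · have h := ht.neg
        simpa using h
    obtain ⟨Y, hY⟩ := exists_pos hWpos hG2c hG2w hG2pos
    exact ⟨⟨fun t => -Y t, hconv Y hY⟩,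
      fun y hy => ⟨⟨fun hcon => (lt_asymm hneg hcon).elim, fun _ => (hpart2 y hy).1⟩,
        (hpart2 y hy).2⟩,
      fun y hy f hf => cesaro_solution hy (hpart2 y hy).2 hf⟩
  · -- 0 < wstar
    rw [uIcc_of_le hpos.le] at hg hsign
    have hgpos : ∀ x, 0 ≤ x → x < wstar → 0 < g x := by
      intro x h0 hxw
      have := hsign x ⟨⟨h0, hxw.le⟩, by simp [hxw.ne]⟩
      nlinarith
    have hpart2 : ∀ y, IsSolutionTo g wstar y →
        MonotoneOn y (Ici 0) ∧ Tendsto y atTop (𝓝 wstar) :=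
      fun y hy => tendsto_pos hpos hg hgw hgpos hy
    exact ⟨exists_pos hpos hg hgw hgpos,
      fun y hy => ⟨⟨fun _ => (hpart2 y hy).1, fun hcon => (lt_asymm hpos hcon).elim⟩,
        (hpart2 y hy).2⟩,
      fun y hy f hf => cesaro_solution hy (hpart2 y hy).2 hf⟩
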